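/- arXiv:2407.03088 — 3 statements merged into one kernel-verified Lean document; each statement's English description precedes it below -/
import Mathlib

section
/- Fix k ∈ (0,1) and an integer m ≥ 2, and let B_m be the associated m×m correlation. If 0 ≤ λ ≤ 1 − √k, then C_λ(B_m) = 2: there exist a density matrix σ on ℂ² ⊗ ℂ² and POVMs {E_x}, {F_y} on ℂ² generating B_m under depolarizing noise of strength λ, while no protocol with local dimension 1 can generate B_m. In particular the cost of the optimal noisy quantum protocol for B_m is constant on the whole interval [0, 1 − √k]. -/
open Matrix BigOperators Finset
open scoped Kronecker ComplexOrder

noncomputable section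

/-- The effect of the depolarizing channel on a measurement effect (Heisenberg picture). -/
def noisyEffect {d : ℕ} (lam : ℝ) (E : Matrix (Fin d) (Fin d) ℂ) : Matrix (Fin d) (Fin d) ℂ :=
  ((1 - lam : ℝ) : ℂ) • E + ((lam : ℂ) * E.trace / (d : ℂ)) • (1 : Matrix (Fin d) (Fin d) ℂ)

/-- A POVM on ℂ^d with n outcomes. -/
def IsPOVM {d n : ℕ} (E : Fin n → Matrix (Fin d) (Fin d) ℂ) : Prop :=
  (∀ x, (E x).PosSemidef) ∧ ∑ x, E x = 1

/-- P is generated with local dimension d under depolarizing noise of strength lam. -/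
def GeneratesWithNoise {n : ℕ} (P : Matrix (Fin n) (Fin n) ℝ) (lam : ℝ) (d : ℕ) : Prop :=
  ∃ (σ : Matrix (Fin d × Fin d) (Fin d × Fin d) ℂ)
    (E F : Fin n → Matrix (Fin d) (Fin d) ℂ),
    σ.PosSemidef ∧ σ.trace = 1 ∧ IsPOVM E ∧ IsPOVM F ∧
    ∀ x y, (P x y : ℂ) =
      ((noisyEffect lam (E x) ⊗ₖ noisyEffect lam (F y)) * σ).trace

/-- The matrix P̂_λ^{s,t}. -/
def Phat {n : ℕ} (P : Matrix (Fin n) (Fin n) ℝ) (lam : ℝ) (s t : Fin n → ℝ)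
    (x y : Fin n) : ℝ :=
  P x y - lam * s x * (∑ a, P a y) - lam * t y * (∑ b, P x b) + lam ^ 2 * s x * t y

/-- Nonnegative rank. -/
def NonnegRank {m n : ℕ} (P : Matrix (Fin m) (Fin n) ℝ) : ℕ :=
  sInf {r : ℕ | ∃ (u : Fin r → Fin m → ℝ) (v : Fin r → Fin n → ℝ),
    (∀ i x, 0 ≤ u i x) ∧ (∀ i y, 0 ≤ v i y) ∧ ∀ x y, P x y = ∑ i, u i x * v i y}

/-- PSD rank. -/
def PsdRank {m n : ℕ} (M : Matrix (Fin m) (Fin n) ℝ) : ℕ :=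
  sInf {r : ℕ | ∃ (C : Fin m → Matrix (Fin r) (Fin r) ℂ)
    (D : Fin n → Matrix (Fin r) (Fin r) ℂ),
    (∀ x, (C x).PosSemidef) ∧ (∀ y, (D y).PosSemidef) ∧
    ∀ x y, (M x y : ℂ) = (C x * D y).trace}

def outerProj {α : Type*} [Fintype α] (ψ : α → ℂ) : Matrix α α ℂ :=
  Matrix.of fun i j => ψ i * (starRingEnd ℂ) (ψ j)

def qval (k : ℝ) : ℝ := 1 / (1 - k) - Real.sqrt (1 / (1 - k) ^ 2 - 1)

def Bmat (m : ℕ) (k : ℝ) : Matrix (Fin m) (Fin m) ℝ :=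
  Matrix.of fun x y =>
    (1 / (m : ℝ) ^ 2) * (1 - k * Real.cos (2 * Real.pi * ((x.val : ℝ) + (y.val : ℝ)) / m))

def Amat (m : ℕ) (k : ℝ) : Matrix (Fin (m + 1)) (Fin (m + 1)) ℝ :=
  Matrix.of fun x y =>
    if x.val = 0 then
      (if y.val = 0 then (1 - qval k) ^ 2 / 2 else qval k * (1 - qval k) / (2 * m))
    else if y.val = 0 then qval k * (1 - qval k) / (2 * m)
    else ((1 + (qval k) ^ 2) / 2) *
      ((1 / (m : ℝ) ^ 2) *
        (1 - k * Real.cos (2 * Real.pi * (((x.val : ℝ) - 1) + ((y.val : ℝ) - 1)) / m)))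

def IsElPsdFactorization {n : ℕ} (P : Matrix (Fin n) (Fin n) ℝ) (lam : ℝ) (r : ℕ)
    (C D : Fin n → Matrix (Fin r) (Fin r) ℂ) : Prop :=
  (∀ x, (C x).PosSemidef) ∧ (∀ y, (D y).PosSemidef) ∧
  (∀ x y, (P x y : ℂ) = (C x * D y).trace) ∧
  IsUnit (∑ k, C k) ∧ IsUnit (∑ k, D k) ∧
  (∀ x, (C x - (((lam : ℂ) / r) * (C x * (∑ k, C k)⁻¹).trace) • (∑ k, C k)).PosSemidef) ∧
  (∀ y, (D y - (((lam : ℂ) / r) * (D y * (∑ k, D k)⁻¹).trace) • (∑ k, D k)).PosSemidef)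


lemma aux_sum_exp_zero (m : ℕ) (hm : 2 ≤ m) :
    ∑ x : Fin m, Complex.exp (2 * Real.pi * (x : ℕ) / m * Complex.I) = 0 := by
  have h0 : (m : ℕ) ≠ 0 := by omega
  have hprim := Complex.isPrimitiveRoot_exp m h0
  have hsum := hprim.geom_sum_eq_zero (by omega : 1 < m)
  rw [Fin.sum_univ_eq_sum_range (fun x => Complex.exp (2 * Real.pi * (x:ℕ) / m * Complex.I))]
  rw [← hsum]
  refine Finset.sum_congr rfl fun i _ => ?_
  rw [← Complex.exp_nat_mul]
  congr 1
  ring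

lemma aux_sum_cos_zero (m : ℕ) (hm : 2 ≤ m) (c : ℝ) :
    ∑ y : Fin m, Real.cos (2 * Real.pi * (c + (y : ℕ)) / m) = 0 := by
  have h := aux_sum_exp_zero m hm
  have hkey : ∀ y : Fin m, Real.cos (2 * Real.pi * (c + (y:ℕ)) / m)
      = (Complex.exp ((2 * Real.pi * c / m : ℝ) * Complex.I) *
         Complex.exp (2 * Real.pi * (y:ℕ) / m * Complex.I)).re := by
    intro y
    rw [← Complex.exp_add, ← Complex.exp_ofReal_mul_I_re]
    congr 2
    push_cast
    ring
  calc ∑ y : Fin m, Real.cos (2 * Real.pi * (c + (y:ℕ)) / m)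
      = (∑ y : Fin m, Complex.exp ((2 * Real.pi * c / m : ℝ) * Complex.I) *
         Complex.exp (2 * Real.pi * (y:ℕ) / m * Complex.I)).re := by
        rw [Complex.re_sum]; exact Finset.sum_congr rfl fun y _ => hkey y
    _ = 0 := by rw [← Finset.mul_sum, h, mul_zero, Complex.zero_re]

lemma aux_outerProj_posSemidef {α : Type*} [Fintype α] (ψ : α → ℂ) :
    (outerProj ψ).PosSemidef := by
  refine Matrix.posSemidef_iff_dotProduct_mulVec.mpr ⟨?_, fun x => ?_⟩
  · ext i j
    simp [outerProj, Matrix.conjTranspose_apply, mul_comm]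
  · have h : star x ⬝ᵥ (outerProj ψ *ᵥ x) =
        star (∑ j, star (ψ j) * x j) * (∑ j, star (ψ j) * x j) := by
      simp only [dotProduct, Matrix.mulVec, outerProj, Matrix.of_apply, Pi.star_apply,
        star_sum, star_mul', star_star, starRingEnd_apply, Finset.sum_mul, Finset.mul_sum]
      rw [Finset.sum_comm]
      refine Finset.sum_congr rfl fun i _ => Finset.sum_congr rfl fun j _ => ?_
      ring
    rw [h]
    exact star_mul_self_nonneg _

def ment : Fin 2 × Fin 2 → ℂ := fun p => if p.1 = p.2 then ((Real.sqrt 2)⁻¹ : ℝ) else 0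

lemma aux_sqrt2_inv_mul : (((Real.sqrt 2 : ℝ) : ℂ))⁻¹ * (((Real.sqrt 2 : ℝ) : ℂ))⁻¹ = 2⁻¹ := by
  rw [← mul_inv, ← Complex.ofReal_mul, Real.mul_self_sqrt (by norm_num)]
  norm_num

lemma aux_trace_outerProj_ment : (outerProj ment).trace = 1 := by
  simp only [Matrix.trace, Matrix.diag, outerProj, Matrix.of_apply, Fintype.sum_prod_type,
    Fin.sum_univ_two, ment]
  norm_num [aux_sqrt2_inv_mul]

lemma aux_trace_kron_ment (A B : Matrix (Fin 2) (Fin 2) ℂ) :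
    ((A ⊗ₖ B) * outerProj ment).trace =
      (A 0 0 * B 0 0 + A 0 1 * B 0 1 + A 1 0 * B 1 0 + A 1 1 * B 1 1) / 2 := by
  simp only [Matrix.trace, Matrix.diag, Matrix.mul_apply, Fintype.sum_prod_type,
    Fin.sum_univ_two, outerProj, Matrix.of_apply, Matrix.kroneckerMap_apply, ment,
    starRingEnd_apply]
  norm_num
  ring_nf
  rw [show ((Real.sqrt 2 : ℝ) : ℂ)⁻¹^2 = 2⁻¹ by rw [sq]; exact aux_sqrt2_inv_mul]
  ring

def effect (c1 c2 : ℝ) (u : ℂ) : Matrix (Fin 2) (Fin 2) ℂ :=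
  outerProj ((c1:ℂ) • ![1, u]) + outerProj ((c2:ℂ) • ![1, -u])

lemma aux_effect_eq (c1 c2 : ℝ) (u : ℂ) (hu : u * star u = 1) :
    effect c1 c2 u = !![((c1^2+c2^2 : ℝ) : ℂ), ((c1^2-c2^2 : ℝ) : ℂ) * star u;
                       ((c1^2-c2^2 : ℝ) : ℂ) * u, ((c1^2+c2^2 : ℝ) : ℂ)] := by
  simp only [RCLike.star_def] at hu ⊢
  ext i j
  fin_cases i <;> fin_cases j <;>
    simp only [effect, outerProj, Matrix.add_apply, Matrix.of_apply, Pi.smul_apply,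
      Fin.mk_zero, Fin.mk_one, _root_.map_one,
      Matrix.cons_val', Matrix.cons_val_zero, Matrix.cons_val_one, Matrix.head_cons,
      Matrix.empty_val', Matrix.cons_val_fin_one, smul_eq_mul, _root_.map_mul,
      Complex.conj_ofReal, RCLike.star_def, star_neg, star_one, mul_one, mul_neg,
      neg_mul, neg_neg, map_neg, Complex.ofReal_sub, Complex.ofReal_add,
      Complex.ofReal_pow, Matrix.vecHead, Matrix.vecTail] <;>
    ring_nf
  linear_combination ((c1:ℂ)^2 + (c2:ℂ)^2) * hu

lemma aux_effect_posSemidef (c1 c2 : ℝ) (u : ℂ) : (effect c1 c2 u).PosSemidef :=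
  (aux_outerProj_posSemidef _).add (aux_outerProj_posSemidef _)

lemma aux_noisyEffect_explicit (lam : ℝ) (a : ℝ) (b u : ℂ) :
    noisyEffect lam (!![((a:ℝ):ℂ), b * star u; b * u, ((a:ℝ):ℂ)]) =
      !![((a:ℝ):ℂ), (((1-lam):ℝ):ℂ) * b * star u;
         (((1-lam):ℝ):ℂ) * b * u, ((a:ℝ):ℂ)] := by
  rw [noisyEffect]
  have htr : (!![((a:ℝ):ℂ), b * star u; b * u, ((a:ℝ):ℂ)]).trace = 2 * ((a:ℝ):ℂ) := by
    simp [Matrix.trace, Fin.sum_univ_two]; ring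
  rw [htr]
  ext i j
  fin_cases i <;> fin_cases j <;>
    simp [Matrix.one_apply, Matrix.smul_apply, Matrix.add_apply, smul_eq_mul] <;>
    push_cast <;> ring

/-- for every λ ∈ [0, 1 − √k], the minimal local dimension of a noisy
quantum protocol generating B_m equals 2: local dimension 2 suffices, while local
dimension 1 does not. -/
theorem Bmat_cost_eq_two_below_threshold
    (k : ℝ) (hk0 : 0 < k) (hk1 : k < 1) (m : ℕ) (hm : 2 ≤ m)
    (lam : ℝ) (hlam0 : 0 ≤ lam) (hlam1 : lam ≤ 1 - Real.sqrt k) :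
    GeneratesWithNoise (Bmat m k) lam 2 ∧ ¬ GeneratesWithNoise (Bmat m k) lam 1 := by
  have hm0 : (m:ℝ) ≠ 0 := Nat.cast_ne_zero.mpr (by omega)
  have hmC : (m:ℂ) ≠ 0 := Nat.cast_ne_zero.mpr (by omega)
  have hsk : 0 < Real.sqrt k := Real.sqrt_pos.mpr hk0
  have hskle : Real.sqrt k ≤ 1 - lam := by linarith
  have h1l : 0 < 1 - lam := lt_of_lt_of_le hsk hskle
  constructor
  · -- dimension 2 suffices
    set r : ℝ := Real.sqrt k / (1 - lam) with hrdef
    have hr0 : 0 ≤ r := div_nonneg hsk.le h1l.le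
    have hr1 : r ≤ 1 := (div_le_one h1l).mpr hskle
    set c1 : ℝ := Real.sqrt ((1+r)/(2*m)) with hc1def
    set c2 : ℝ := Real.sqrt ((1-r)/(2*m)) with hc2def
    have hc1 : c1^2 = (1+r)/(2*m) := Real.sq_sqrt (by positivity)
    have hc2 : c2^2 = (1-r)/(2*m) := Real.sq_sqrt (div_nonneg (by linarith) (by positivity))
    have hmpos : (0:ℝ) < m := by exact_mod_cast Nat.pos_of_ne_zero (by omega)
    have hsumc : c1^2 + c2^2 = 1/m := by
      rw [hc1, hc2, ← add_div, show (1+r)+(1-r) = (2:ℝ) by ring,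
        div_eq_div_iff (by linarith) (by linarith)]
      ring
    have hdiffc : (1 - lam) * (c1^2 - c2^2) = Real.sqrt k / m := by
      rw [hc1, hc2, hrdef]; field_simp; ring
    set θ : Fin m → ℝ := fun x => 2 * Real.pi * (x:ℕ) / m with hθdef
    set e : Fin m → ℂ := fun x => Complex.exp ((θ x : ℝ) * Complex.I) with hedef
    have hstar : ∀ t : ℝ, star (Complex.exp ((t:ℂ) * Complex.I))
        = Complex.exp (((-t : ℝ):ℂ) * Complex.I) := by
      intro t
      rw [RCLike.star_def, ← Complex.exp_conj]
      congr 1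
      simp [Complex.conj_ofReal]
    have hu : ∀ x, e x * star (e x) = 1 := by
      intro x
      rw [hedef]
      simp only
      rw [hstar (θ x), ← Complex.exp_add,
        show ((θ x : ℝ):ℂ) * Complex.I + ((-θ x : ℝ):ℂ) * Complex.I = 0 by push_cast; ring,
        Complex.exp_zero]
    have hu' : ∀ y, (-(e y)) * star (-(e y)) = 1 := fun y => by
      rw [star_neg, neg_mul_neg]; exact hu y
    have hesum : ∑ x : Fin m, e x = 0 := by
      rw [← aux_sum_exp_zero m hm]
      refine Finset.sum_congr rfl fun x _ => ?_
      rw [hedef]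
      simp only
      congr 1
      push_cast [hθdef]
      ring
    have hesumstar : ∑ x : Fin m, star (e x) = 0 := by
      rw [← star_sum, hesum, star_zero]
    have hsumcC : ((c1^2+c2^2 : ℝ) : ℂ) = 1/(m:ℂ) := by rw [hsumc]; push_cast; ring
    have hEeq : ∀ x, effect c1 c2 (e x)
        = !![((c1^2+c2^2:ℝ):ℂ), ((c1^2-c2^2:ℝ):ℂ) * star (e x);
             ((c1^2-c2^2:ℝ):ℂ) * (e x), ((c1^2+c2^2:ℝ):ℂ)] :=
      fun x => aux_effect_eq _ _ _ (hu x)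
    have hFeq : ∀ y, effect c1 c2 (-(e y))
        = !![((c1^2+c2^2:ℝ):ℂ), ((c1^2-c2^2:ℝ):ℂ) * star (-(e y));
             ((c1^2-c2^2:ℝ):ℂ) * (-(e y)), ((c1^2+c2^2:ℝ):ℂ)] :=
      fun y => aux_effect_eq _ _ _ (hu' y)
    refine ⟨outerProj ment, fun x => effect c1 c2 (e x), fun y => effect c1 c2 (-(e y)),
      aux_outerProj_posSemidef _, aux_trace_outerProj_ment,
      ⟨fun x => aux_effect_posSemidef _ _ _, ?_⟩,
      ⟨fun y => aux_effect_posSemidef _ _ _, ?_⟩, ?_⟩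
    · rw [Finset.sum_congr rfl fun x _ => hEeq x]
      ext i j
      rw [Matrix.sum_apply]
      fin_cases i <;> fin_cases j
      · simp only [Fin.mk_zero, Fin.mk_one, Fin.isValue, Matrix.of_apply, Matrix.cons_val', Matrix.cons_val_zero, Matrix.empty_val',
          Matrix.cons_val_fin_one, Finset.sum_const, Finset.card_univ, Fintype.card_fin,
          nsmul_eq_mul, hsumcC, Matrix.one_apply_eq]
        field_simp
      · simp only [Fin.mk_zero, Fin.mk_one, Fin.isValue, Matrix.of_apply, Matrix.cons_val', Matrix.cons_val_zero, Matrix.cons_val_one,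
          Matrix.head_cons, Matrix.empty_val', Matrix.cons_val_fin_one]
        rw [← Finset.mul_sum, hesumstar, mul_zero]
        simp [Matrix.one_apply]
      · simp only [Fin.mk_zero, Fin.mk_one, Fin.isValue, Matrix.of_apply, Matrix.cons_val', Matrix.cons_val_zero, Matrix.cons_val_one,
          Matrix.head_cons, Matrix.empty_val', Matrix.cons_val_fin_one, Matrix.head_fin_const]
        rw [← Finset.mul_sum, hesum, mul_zero]
        simp [Matrix.one_apply]
      · simp only [Fin.mk_zero, Fin.mk_one, Fin.isValue, Matrix.of_apply, Matrix.cons_val', Matrix.cons_val_zero, Matrix.cons_val_one,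
          Matrix.head_cons, Matrix.empty_val', Matrix.cons_val_fin_one, Matrix.head_fin_const,
          Finset.sum_const, Finset.card_univ, Fintype.card_fin,
          nsmul_eq_mul, hsumcC, Matrix.one_apply_eq]
        field_simp
    · rw [Finset.sum_congr rfl fun y _ => hFeq y]
      have hesumneg : ∑ y : Fin m, -(e y) = 0 := by rw [Finset.sum_neg_distrib, hesum, neg_zero]
      have hesumstarneg : ∑ y : Fin m, star (-(e y)) = 0 := by
        rw [← star_sum, hesumneg, star_zero]
      ext i j
      rw [Matrix.sum_apply]
      fin_cases i <;> fin_cases j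
      · simp only [Fin.mk_zero, Fin.mk_one, Fin.isValue, Matrix.of_apply, Matrix.cons_val', Matrix.cons_val_zero, Matrix.empty_val',
          Matrix.cons_val_fin_one, Finset.sum_const, Finset.card_univ, Fintype.card_fin,
          nsmul_eq_mul, hsumcC, Matrix.one_apply_eq]
        field_simp
      · simp only [Fin.mk_zero, Fin.mk_one, Fin.isValue, Matrix.of_apply, Matrix.cons_val', Matrix.cons_val_zero, Matrix.cons_val_one,
          Matrix.head_cons, Matrix.empty_val', Matrix.cons_val_fin_one]
        rw [← Finset.mul_sum, hesumstarneg, mul_zero]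
        simp [Matrix.one_apply]
      · simp only [Fin.mk_zero, Fin.mk_one, Fin.isValue, Matrix.of_apply, Matrix.cons_val', Matrix.cons_val_zero, Matrix.cons_val_one,
          Matrix.head_cons, Matrix.empty_val', Matrix.cons_val_fin_one, Matrix.head_fin_const]
        rw [← Finset.mul_sum, hesumneg, mul_zero]
        simp [Matrix.one_apply]
      · simp only [Fin.mk_zero, Fin.mk_one, Fin.isValue, Matrix.of_apply, Matrix.cons_val', Matrix.cons_val_zero, Matrix.cons_val_one,
          Matrix.head_cons, Matrix.empty_val', Matrix.cons_val_fin_one, Matrix.head_fin_const,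
          Finset.sum_const, Finset.card_univ, Fintype.card_fin,
          nsmul_eq_mul, hsumcC, Matrix.one_apply_eq]
        field_simp
    · intro x y
      have hsk2 : (((1 - lam):ℝ):ℂ) * ((c1^2-c2^2:ℝ):ℂ) = (Real.sqrt k : ℂ) / (m:ℂ) := by
        rw [← Complex.ofReal_mul, hdiffc]
        push_cast
        ring
      have e3 : (Real.sqrt k:ℂ) * (Real.sqrt k:ℂ) = (k:ℂ) := by
        rw [← Complex.ofReal_mul, Real.mul_self_sqrt hk0.le]
      set X : ℂ := Complex.exp (((θ x + θ y : ℝ):ℂ) * Complex.I) with hXdef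
      set Y : ℂ := Complex.exp (((-(θ x + θ y) : ℝ):ℂ) * Complex.I) with hYdef
      have h1 : e x * (-(e y)) = -X := by
        rw [hedef]; simp only
        rw [hXdef, mul_neg, ← Complex.exp_add]
        congr 2
        push_cast
        ring
      have h2 : star (e x) * star (-(e y)) = -Y := by
        rw [star_neg, mul_neg, hedef]
        simp only
        rw [hstar (θ x), hstar (θ y), ← Complex.exp_add, hYdef]
        congr 2
        push_cast
        ring
      have hXY : X + Y = 2 * Complex.cos ((θ x + θ y : ℝ):ℂ) := by
        rw [hXdef, hYdef]
        push_cast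
        rw [Complex.exp_mul_I, Complex.exp_mul_I, Complex.cos_neg, Complex.sin_neg]
        ring
      have hcosC : ((Real.cos (2*Real.pi*((x.val:ℝ)+(y.val:ℝ))/m)):ℂ) = (X+Y)/2 := by
        rw [show 2*Real.pi*((x.val:ℝ)+(y.val:ℝ))/m = θ x + θ y by
              rw [hθdef]; push_cast; ring,
          Complex.ofReal_cos, hXY]
        ring
      have hBval : (Bmat m k x y : ℂ) = 1/(m:ℂ)^2 * (1 - (k:ℂ) * ((X+Y)/2)) := by
        simp only [Bmat, Matrix.of_apply]
        rw [Complex.ofReal_mul, Complex.ofReal_sub, Complex.ofReal_mul, hcosC]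
        push_cast
        ring
      rw [show (fun x => effect c1 c2 (e x)) x = effect c1 c2 (e x) from rfl,
        show (fun y => effect c1 c2 (-(e y))) y = effect c1 c2 (-(e y)) from rfl,
        hEeq x, hFeq y, aux_noisyEffect_explicit, aux_noisyEffect_explicit,
        aux_trace_kron_ment, hBval]
      simp only [Fin.mk_zero, Fin.mk_one, Fin.isValue, Matrix.of_apply, Matrix.cons_val', Matrix.cons_val_zero, Matrix.cons_val_one,
        Matrix.head_cons, Matrix.empty_val', Matrix.cons_val_fin_one, Matrix.head_fin_const]
      rw [hsumcC, hsk2]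
      linear_combination (-(((Real.sqrt k:ℂ)) * ((Real.sqrt k:ℂ)))/(2*(m:ℂ)^2)) * h1
        + (-(((Real.sqrt k:ℂ)) * ((Real.sqrt k:ℂ)))/(2*(m:ℂ)^2)) * h2
        + ((X+Y)/(2*(m:ℂ)^2)) * e3
  · -- dimension 1 impossible
    rintro ⟨σ, E, F, hσ, hσtr, ⟨hE1, hEsum⟩, ⟨hF1, hFsum⟩, hgen⟩
    have hσ00 : σ (0,0) (0,0) = 1 := by
      simpa [Matrix.trace, Matrix.diag, Fintype.sum_prod_type] using hσtr
    have key : ∀ x y, (Bmat m k x y : ℂ) = E x 0 0 * F y 0 0 := by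
      intro x y
      have h := hgen x y
      simp [Matrix.trace, Matrix.diag, Matrix.mul_apply, Fintype.sum_prod_type,
        Matrix.kroneckerMap_apply, noisyEffect, Matrix.one_apply, hσ00,
        Matrix.add_apply, Matrix.smul_apply, smul_eq_mul] at h
      rw [h]
      ring
    have hrowB : ∀ x : Fin m, ∑ y, Bmat m k x y = 1/m := by
      intro x
      have hc := aux_sum_cos_zero m hm (x.val:ℝ)
      simp only [Bmat, Matrix.of_apply]
      rw [← Finset.mul_sum, Finset.sum_sub_distrib, ← Finset.mul_sum]
      push_cast at hc
      rw [hc]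
      simp [Finset.card_univ]
      field_simp
    have hrow2 : ∀ x : Fin m, E x 0 0 * (∑ y, F y 0 0) = 1/(m:ℂ) := by
      intro x
      rw [Finset.mul_sum]
      have : ∑ y, E x 0 0 * F y 0 0 = ∑ y, (Bmat m k x y : ℂ) :=
        Finset.sum_congr rfl fun y _ => (key x y).symm
      rw [this, ← Complex.ofReal_sum, hrowB x]
      push_cast
      ring
    have hx0 : (⟨0, by omega⟩ : Fin m) = ⟨0, by omega⟩ := rfl
    set x0 : Fin m := ⟨0, by omega⟩
    set x1 : Fin m := ⟨1, by omega⟩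
    have hSne : (∑ y, F y 0 0) ≠ 0 := by
      intro h
      have := hrow2 x0
      rw [h, mul_zero] at this
      exact (one_div_ne_zero hmC) this.symm
    have hxeq : E x0 0 0 = E x1 0 0 :=
      mul_right_cancel₀ hSne (by rw [hrow2 x0, hrow2 x1])
    have hBeq : (Bmat m k x0 x0 : ℂ) = (Bmat m k x1 x0 : ℂ) := by
      rw [key x0 x0, key x1 x0, hxeq]
    have hBeqR : Bmat m k x0 x0 = Bmat m k x1 x0 := by exact_mod_cast hBeq
    have hπ := Real.pi_pos
    have hm2 : (2:ℝ) ≤ m := by exact_mod_cast hm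
    have h00 : Bmat m k x0 x0 = 1/(m:ℝ)^2 * (1 - k) := by
      simp only [Bmat, Matrix.of_apply]
      norm_num [x0]
    have h10 : Bmat m k x1 x0 = 1/(m:ℝ)^2 * (1 - k * Real.cos (2*Real.pi/m)) := by
      simp only [Bmat, Matrix.of_apply]
      norm_num [x0, x1]
    rw [h00, h10] at hBeqR
    have hmsq : (1:ℝ)/m^2 ≠ 0 := by positivity
    have hck : 1 - k = 1 - k * Real.cos (2*Real.pi/m) := mul_left_cancel₀ hmsq hBeqR
    have hcos1 : Real.cos (2*Real.pi/m) = 1 := by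
      have hkc : k * Real.cos (2*Real.pi/m) = k * 1 := by linarith
      exact mul_left_cancel₀ hk0.ne' hkc
    have harg1 : 0 < 2*Real.pi/m := by positivity
    have harg2 : 2*Real.pi/m < 2*Real.pi := by
      rw [div_lt_iff₀ (by positivity : (0:ℝ) < m)]
      nlinarith
    have := (Real.cos_eq_one_iff_of_lt_of_lt (by linarith) harg2).mp hcos1
    linarith

end
end

section
/- Let m ≥ 3 be an integer and k ∈ (0,1) with k > cos(2π/m)/cos²(π/m). Then the nonnegative rank of the m×m correlation B_m satisfies rank_+(B_m) > log₂(m/2). -/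
open Matrix BigOperators Finset
open scoped Kronecker ComplexOrder

noncomputable section

section AuxForStatement15
open Real MeasureTheory


private lemma arccos_le_arccos' {x y : ℝ} (hy : -1 ≤ y) (hxy : y ≤ x) (hx1 : x ≤ 1) :
    Real.arccos x ≤ Real.arccos y := by
  rcases eq_or_lt_of_le hxy with h | h
  · rw [h]
  · exact le_of_lt (Real.strictAntiOn_arccos ⟨hy, le_trans hxy hx1⟩ ⟨le_trans hy hxy, hx1⟩ h)

/-- The grid lemma: some multiple of `2π/m` is within `π/m` of `-ω` mod `2π`. -/
private lemma grid_cos (m : ℕ) (hm : 3 ≤ m) (ω : ℝ) :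
    ∃ x : Fin m, Real.cos (π / m) ≤ Real.cos (2 * π * x / m + ω) := by
  have hm0 : (0:ℝ) < m := by positivity
  have hπ : (0:ℝ) < π := Real.pi_pos
  set v : ℝ := (-ω) * m / (2 * π) + 1/2 with hv
  set n : ℤ := ⌊v⌋ with hn
  have h1 : (n:ℝ) ≤ v := Int.floor_le v
  have h2 : v < n + 1 := Int.lt_floor_add_one v
  rw [hv] at h1 h2
  have h1' : ((n:ℝ) - 1/2) * (2*π) ≤ -ω * m := by
    rw [← le_div_iff₀ (by positivity : (0:ℝ) < 2*π)]; linarith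
  have h2' : -ω * m < ((n:ℝ) + 1/2) * (2*π) := by
    rw [← div_lt_iff₀ (by positivity : (0:ℝ) < 2*π)]; linarith
  have hπm : π / (m:ℝ) * m = π := div_mul_cancel₀ _ (ne_of_gt hm0)
  have key : |2 * π * n / m + ω| ≤ π / m := by
    have heq : 2 * π * (n:ℝ) / m + ω = (2 * π * n + ω * m) / m := by field_simp
    rw [abs_le, heq]
    constructor
    · rw [le_div_iff₀ hm0]; nlinarith [hπm]
    · rw [div_le_div_iff₀ hm0 hm0]; nlinarith [hπm]
  have hmz : (m:ℤ) ≠ 0 := by positivity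
  have hmod : 0 ≤ n % m := Int.emod_nonneg n hmz
  have hmodlt : n % m < m := Int.emod_lt_of_pos n (by positivity)
  refine ⟨⟨(n % m).toNat, by omega⟩, ?_⟩
  have hcast : ((((n % m).toNat : ℕ)) : ℝ) = ((n % m : ℤ) : ℝ) := by
    exact_mod_cast congrArg (Int.cast : ℤ → ℝ) (Int.toNat_of_nonneg hmod)
  show Real.cos (π / m) ≤ Real.cos (2 * π * (((n % m).toNat : ℕ) : ℝ) / m + ω)
  rw [hcast]
  have hdiv : ((n % m : ℤ) : ℝ) = (n : ℝ) - (m : ℝ) * ((n / m : ℤ) : ℝ) := by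
    have := Int.emod_add_mul_ediv n m
    push_cast
    have : ((n % m : ℤ) : ℝ) + (m : ℝ) * ((n / m : ℤ) : ℝ) = (n:ℝ) := by exact_mod_cast congrArg (Int.cast : ℤ → ℝ) this
    linarith
  have heq2 : 2 * π * ((n % m : ℤ) : ℝ) / m + ω
      = (2 * π * n / m + ω) + (-(n/m : ℤ) : ℤ) * (2 * π) := by
    rw [hdiv]; push_cast; field_simp; ring
  rw [heq2, Real.cos_add_int_mul_two_pi]
  calc Real.cos (π / m) ≤ Real.cos |2 * π * ↑n / ↑m + ω| := by
        apply Real.cos_le_cos_of_nonneg_of_le_pi (abs_nonneg _) ?_ key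
        calc π / (m:ℝ) ≤ π / 1 := by
              apply div_le_div_of_nonneg_left (le_of_lt hπ) one_pos
              exact_mod_cast Nat.one_le_iff_ne_zero.mpr (by omega)
          _ ≤ π := by linarith
    _ = Real.cos (2 * π * ↑n / ↑m + ω) := Real.cos_abs _

/-- From `κ ≤ |cos(D/2)|` conclude `D` is near `0` or near `2π`. -/
private lemma near_lemma {κ D : ℝ} (hκ0 : 0 < κ) (hκ1 : κ < 1) (hD0 : 0 ≤ D) (hD2 : D < 2*π)
    (h : κ ≤ |Real.cos (D/2)|) :
    D ≤ 2 * Real.arccos κ ∨ 2*π - 2 * Real.arccos κ ≤ D := by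
  have hπ := Real.pi_pos
  rcases abs_cases (Real.cos (D/2)) with ⟨he, _⟩ | ⟨he, _⟩
  · left
    rw [he] at h
    have h1 : Real.arccos (Real.cos (D/2)) ≤ Real.arccos κ :=
      arccos_le_arccos' (by linarith) h (Real.cos_le_one _)
    rw [Real.arccos_cos (by linarith) (by linarith)] at h1
    linarith
  · right
    rw [he] at h
    have hc : κ ≤ Real.cos (π - D/2) := by rw [Real.cos_pi_sub]; linarith
    have h1 : Real.arccos (Real.cos (π - D/2)) ≤ Real.arccos κ :=
      arccos_le_arccos' (by linarith) hc (Real.cos_le_one _)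
    rw [Real.arccos_cos (by linarith) (by linarith)] at h1
    linarith

/-- Measure bound for a set in `[0, 2π)` whose points are pairwise within `δ` circularly. -/
private lemma fiber_measure {δ : ℝ} (hδ0 : 0 ≤ δ) (hδ : δ < 2*π/3)
    (F : Set ℝ) (hF : F ⊆ Set.Ico 0 (2*π))
    (hpair : ∀ a ∈ F, ∀ b ∈ F, |a - b| ≤ δ ∨ 2*π - δ ≤ |a - b|) :
    volume F ≤ ENNReal.ofReal δ := by
  have hπ := Real.pi_pos
  rcases Set.eq_empty_or_nonempty F with rfl | ⟨a₀, ha₀⟩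
  · simp
  by_cases hfar : ∃ a ∈ F, ∃ b ∈ F, 2*π - δ ≤ |a - b| ∧ a < b
  · obtain ⟨a, ha, b, hb, hab, haltb⟩ := hfar
    have ha' := hF ha
    have hb' := hF hb
    have hba : b - a ≥ 2*π - δ := by
      rcases abs_cases (a - b) with ⟨he, _⟩ | ⟨he, _⟩ <;> [linarith [he ▸ hab]; linarith [he ▸ hab]]
    have haδ : a < δ := by
      have := hb'.2; linarith
    -- split F
    set Flo := F ∩ Set.Iic (a + δ) with hFlo
    set Fhi := F ∩ Set.Ici (a + 2*π - δ) with hFhi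
    have hsplit : F ⊆ Flo ∪ Fhi := by
      intro c hc
      rcases hpair c hc a ha with h | h
      · left; exact ⟨hc, by rcases abs_cases (c - a) with ⟨he,_⟩|⟨he,_⟩ <;> simp only [Set.mem_Iic] <;> linarith⟩
      · rcases abs_cases (c - a) with ⟨he, _⟩ | ⟨he, _⟩
        · right; exact ⟨hc, by simp only [Set.mem_Ici]; linarith⟩
        · exfalso
          have hc' := hF hc
          have := hc'.1
          linarith [(hF ha).2]
    -- gap between the two parts
    have hgap : ∀ c ∈ Flo, ∀ e ∈ Fhi, e - c ≥ 2*π - δ := by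
      intro c hc e he
      have h1 : c ≤ a + δ := hc.2
      have h2 : a + 2*π - δ ≤ e := he.2
      have hce : e - c ≥ 2*π - 2*δ := by linarith
      rcases hpair e he.1 c hc.1 with h | h
      · exfalso
        rcases abs_cases (e - c) with ⟨heq, _⟩ | ⟨heq, _⟩ <;> nlinarith
      · rcases abs_cases (e - c) with ⟨heq, _⟩ | ⟨heq, _⟩
        · linarith
        · exfalso; nlinarith
    have hFlone : Flo.Nonempty := ⟨a, ha, by simp only [Set.mem_Iic]; linarith⟩
    have hFhine : Fhi.Nonempty := ⟨b, hb, by simp only [Set.mem_Ici]; linarith⟩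
    have hbddlo : BddAbove Flo := ⟨a + δ, fun c hc => hc.2⟩
    have hbddhi : BddBelow Fhi := ⟨0, fun c hc => (hF hc.1).1⟩
    set A := sSup Flo with hA
    set B := sInf Fhi with hB
    have hAB : B - A ≥ 2*π - δ := by
      have h1 : ∀ e ∈ Fhi, A ≤ e - (2*π - δ) := by
        intro e he
        apply csSup_le hFlone
        intro c hc
        linarith [hgap c hc e he]
      have : A + (2*π - δ) ≤ B := le_csInf hFhine (fun e he => by linarith [h1 e he])
      linarith
    have hA0 : 0 ≤ A := le_csSup hbddlo hFlone.choose_spec |>.trans' (hF hFlone.choose_spec.1).1 |>.trans (le_refl A) |>.trans_eq rfl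
    have hB2π : B < 2*π := lt_of_le_of_lt (csInf_le hbddhi hFhine.choose_spec) (hF hFhine.choose_spec.1).2
    have hcover : F ⊆ Set.Icc 0 A ∪ Set.Icc B (2*π) := by
      intro c hc
      rcases hsplit hc with h | h
      · left; exact ⟨(hF hc).1, le_csSup hbddlo h⟩
      · right; exact ⟨csInf_le hbddhi h, le_of_lt (hF hc).2⟩
    calc volume F ≤ volume (Set.Icc 0 A ∪ Set.Icc B (2*π)) := measure_mono hcover
      _ ≤ volume (Set.Icc 0 A) + volume (Set.Icc B (2*π)) := measure_union_le _ _
      _ = ENNReal.ofReal (A - 0) + ENNReal.ofReal (2*π - B) := by rw [Real.volume_Icc, Real.volume_Icc]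
      _ = ENNReal.ofReal (A + (2*π - B)) := by
          rw [← ENNReal.ofReal_add (by linarith) (by linarith)]
          norm_num
      _ ≤ ENNReal.ofReal δ := ENNReal.ofReal_le_ofReal (by linarith)
  · -- all pairs are close
    push_neg at hfar
    have hclose : ∀ a ∈ F, ∀ b ∈ F, |a - b| ≤ δ := by
      intro a ha b hb
      rcases lt_trichotomy a b with h | h | h
      · rcases hpair a ha b hb with hh | hh
        · exact hh
        · exact absurd h (by simpa using hfar a ha b hb hh)
      · simp [h, hδ0]
      · rcases hpair b hb a ha with hh | hh
        · rwa [abs_sub_comm]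
        · exact absurd h (by simpa using hfar b hb a ha hh)
    have hbdd : BddBelow F := ⟨0, fun c hc => (hF hc).1⟩
    have hsub : F ⊆ Set.Icc (sInf F) (sInf F + δ) := by
      intro c hc
      refine ⟨csInf_le hbdd hc, ?_⟩
      have : ∀ e ∈ F, c - δ ≤ e := by
        intro e he
        rcases abs_cases (c - e) with ⟨he', _⟩ | ⟨he', _⟩ <;> linarith [hclose c hc e he]
      linarith [le_csInf ⟨a₀, ha₀⟩ this]
    calc volume F ≤ volume (Set.Icc (sInf F) (sInf F + δ)) := measure_mono hsub
      _ = ENNReal.ofReal δ := by rw [Real.volume_Icc]; norm_num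

private def Kset (m r : ℕ) (u : Fin r → Fin m → ℝ) : Set ((Fin r → ℝ) × ℝ × ℝ) :=
  {p | (∀ i, 0 ≤ p.1 i) ∧ (∀ i, (∀ x, u i x = 0) → p.1 i = 0) ∧
    ∀ x : Fin m, (∑ i, u i x * p.1 i) =
      1 + p.2.1 * Real.cos (2*π*(x:ℕ)/m) + p.2.2 * Real.sin (2*π*(x:ℕ)/m)}

private lemma dir_le (m : ℕ) (hm : 3 ≤ m) (β γ : ℝ) :
    ∃ x : Fin m, β * Real.cos (2*π*(x:ℕ)/m) + γ * Real.sin (2*π*(x:ℕ)/m)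
      ≤ -(Real.sqrt (β^2 + γ^2) * Real.cos (π/m)) := by
  by_cases h0 : β = 0 ∧ γ = 0
  · obtain ⟨rfl, rfl⟩ := h0
    refine ⟨⟨0, by omega⟩, by norm_num⟩
  · set z : ℂ := β + γ * Complex.I with hz
    have hz0 : z ≠ 0 := by
      simp only [hz, ne_eq, Complex.ext_iff, Complex.add_re, Complex.ofReal_re,
        Complex.mul_re, Complex.I_re, Complex.I_im, Complex.ofReal_im, Complex.add_im,
        Complex.mul_im, Complex.zero_re, Complex.zero_im]
      intro h
      exact h0 ⟨by linarith [h.1], by linarith [h.2]⟩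
    have hre : z.re = β := by simp [hz]
    have him : z.im = γ := by simp [hz]
    set ρ := ‖z‖ with hρ
    have hρ0 : 0 < ρ := norm_pos_iff.mpr hz0
    have hρval : ρ = Real.sqrt (β^2 + γ^2) := by
      rw [hρ, Complex.norm_def, hz, Complex.normSq_add_mul_I]
    set ω := Complex.arg z with hω
    have hcos : Real.cos ω = β / ρ := by rw [hω, Complex.cos_arg hz0, hre]
    have hsin : Real.sin ω = γ / ρ := by rw [hω, Complex.sin_arg, him]
    have hβ : β = ρ * Real.cos ω := by rw [hcos]; field_simp
    have hγ : γ = ρ * Real.sin ω := by rw [hsin]; field_simp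
    obtain ⟨x, hx⟩ := grid_cos m hm (π - ω)
    refine ⟨x, ?_⟩
    have harg : 2*π*(x:ℕ)/m + (π - ω) = (2*π*(x:ℕ)/m - ω) + π := by ring
    rw [harg, Real.cos_add_pi] at hx
    have hcosle : Real.cos (2*π*(x:ℕ)/m - ω) ≤ -Real.cos (π/m) := by linarith
    have hlhs : β * Real.cos (2*π*(x:ℕ)/m) + γ * Real.sin (2*π*(x:ℕ)/m)
        = ρ * Real.cos (2*π*(x:ℕ)/m - ω) := by
      rw [hβ, hγ, Real.cos_sub]; ring
    rw [hlhs]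
    calc ρ * Real.cos (2*π*(x:ℕ)/m - ω) ≤ ρ * (-Real.cos (π/m)) := by
          exact mul_le_mul_of_nonneg_left hcosle (le_of_lt hρ0)
      _ = -(ρ * Real.cos (π/m)) := by ring
      _ = -(Real.sqrt (β^2+γ^2) * Real.cos (π/m)) := by rw [hρval]

private lemma cos_pos_m (m : ℕ) (hm : 3 ≤ m) : 0 < Real.cos (π/m) := by
  have hπ := Real.pi_pos
  have hm0 : (0:ℝ) < m := by positivity
  apply Real.cos_pos_of_mem_Ioo
  constructor
  · have : (0:ℝ) < π/m := by positivity
    linarith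
  · have h3 : (3:ℝ) ≤ m := by exact_mod_cast hm
    rw [div_lt_div_iff₀ hm0 (by norm_num : (0:ℝ) < 2)]
    nlinarith

private lemma outer_bd (m r : ℕ) (hm : 3 ≤ m) (u : Fin r → Fin m → ℝ)
    (hu : ∀ i x, 0 ≤ u i x) (p : (Fin r → ℝ) × ℝ × ℝ) (hp : p ∈ Kset m r u) :
    p.2.1^2 + p.2.2^2 ≤ (1 / Real.cos (π/m))^2 := by
  have hcpos := cos_pos_m m hm
  obtain ⟨x, hx⟩ := dir_le m hm p.2.1 p.2.2
  have hsum : (0:ℝ) ≤ ∑ i, u i x * p.1 i :=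
    Finset.sum_nonneg (fun i _ => mul_nonneg (hu i x) (hp.1 i))
  rw [hp.2.2 x] at hsum
  have h1 : Real.sqrt (p.2.1^2 + p.2.2^2) * Real.cos (π/m) ≤ 1 := by nlinarith
  have h2 : Real.sqrt (p.2.1^2 + p.2.2^2) ≤ 1 / Real.cos (π/m) := by
    rw [le_div_iff₀ hcpos]; exact h1
  have h3 : (0:ℝ) ≤ p.2.1^2 + p.2.2^2 := by positivity
  calc p.2.1^2 + p.2.2^2 = Real.sqrt (p.2.1^2 + p.2.2^2)^2 := (Real.sq_sqrt h3).symm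
    _ ≤ (1 / Real.cos (π/m))^2 := by
        apply pow_le_pow_left₀ (Real.sqrt_nonneg _) h2

private lemma ext_le (m r : ℕ) (u : Fin r → Fin m → ℝ) (hr : 0 < r)
    (p' p : (Fin r → ℝ) × ℝ × ℝ) (hp' : p' ∈ Kset m r u) (hp : p ∈ Kset m r u)
    (hsupp : ∀ i, p'.1 i = 0 → p.1 i = 0) (c s : ℝ)
    (hmax : ∀ w ∈ Kset m r u, w.2.1 * c + w.2.2 * s ≤ p'.2.1 * c + p'.2.2 * s) :
    p'.2.1 * c + p'.2.2 * s ≤ p.2.1 * c + p.2.2 * s := by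
  haveI : Nonempty (Fin r) := ⟨⟨0, hr⟩⟩
  have hne : (Finset.univ : Finset (Fin r)).Nonempty := Finset.univ_nonempty
  set f : Fin r → ℝ := fun i => if p'.1 i = 0 then 1 else p'.1 i with hf
  set M := Finset.univ.inf' hne f with hM
  set C := Finset.univ.sup' hne (fun i => |p'.1 i - p.1 i|) with hC
  have hM0 : 0 < M := by
    rw [hM, Finset.lt_inf'_iff]
    intro i _
    by_cases h : p'.1 i = 0
    · simp [hf, h]
    · simp only [hf, if_neg h]
      exact lt_of_le_of_ne (hp'.1 i) (Ne.symm h)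
  have hC0 : 0 ≤ C :=
    le_trans (abs_nonneg _) (Finset.le_sup' (fun i => |p'.1 i - p.1 i|) (Finset.mem_univ ⟨0,hr⟩))
  set t := M / (C + 1) with ht
  have ht0 : 0 < t := by positivity
  set w : (Fin r → ℝ) × ℝ × ℝ :=
    (fun i => p'.1 i + t * (p'.1 i - p.1 i),
     p'.2.1 + t * (p'.2.1 - p.2.1), p'.2.2 + t * (p'.2.2 - p.2.2)) with hw
  have hwK : w ∈ Kset m r u := by
    refine ⟨?_, ?_, ?_⟩
    · intro i
      by_cases h : p'.1 i = 0
      · show 0 ≤ p'.1 i + t * (p'.1 i - p.1 i)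
        rw [h, hsupp i h]; norm_num
      · have h1 : M ≤ p'.1 i := by
          have h2 := Finset.inf'_le f (Finset.mem_univ i)
          rw [← hM] at h2
          simpa [hf, if_neg h] using h2
        have h2 : |p'.1 i - p.1 i| ≤ C :=
          Finset.le_sup' (fun i => |p'.1 i - p.1 i|) (Finset.mem_univ i)
        have h4 : t * C < M := by
          rw [ht, div_mul_eq_mul_div, div_lt_iff₀ (by linarith)]
          nlinarith
        show 0 ≤ p'.1 i + t * (p'.1 i - p.1 i)
        have h5 : -(|p'.1 i - p.1 i|) ≤ p'.1 i - p.1 i := neg_abs_le _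
        nlinarith
    · intro i hdead
      have h1 := hp'.2.1 i hdead
      have h2 := hp.2.1 i hdead
      show p'.1 i + t * (p'.1 i - p.1 i) = 0
      rw [h1, h2]; ring
    · intro x
      have e1 := hp'.2.2 x
      have e2 := hp.2.2 x
      show ∑ i, u i x * (p'.1 i + t * (p'.1 i - p.1 i)) = _
      have hterm : ∀ i, u i x * (p'.1 i + t * (p'.1 i - p.1 i))
          = (1+t) * (u i x * p'.1 i) - t * (u i x * p.1 i) := fun i => by ring
      rw [Finset.sum_congr rfl (fun i _ => hterm i), Finset.sum_sub_distrib,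
        ← Finset.mul_sum, ← Finset.mul_sum, e1, e2]
      show (1+t) * (1 + p'.2.1 * _ + p'.2.2 * _) - t * (1 + p.2.1 * _ + p.2.2 * _)
        = 1 + (p'.2.1 + t * (p'.2.1 - p.2.1)) * _ + (p'.2.2 + t * (p'.2.2 - p.2.2)) * _
      ring
  have hle := hmax w hwK
  simp only [hw] at hle
  by_contra hcon
  push_neg at hcon
  nlinarith

set_option maxHeartbeats 1000000 in
private lemma pair_bound (m r : ℕ) (hm : 3 ≤ m) (hr : 0 < r) (k : ℝ) (hk0 : 0 < k)
    (u : Fin r → Fin m → ℝ) (hu : ∀ i x, 0 ≤ u i x)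
    (hinner : ∀ ψ : ℝ, ∃ p ∈ Kset m r u,
      k * Real.cos (π/m) ≤ p.2.1 * Real.cos ψ + p.2.2 * Real.sin ψ)
    (g : ℝ → (Fin r → ℝ) × ℝ × ℝ) (hgK : ∀ ψ, g ψ ∈ Kset m r u)
    (hgmax : ∀ ψ, ∀ q ∈ Kset m r u,
      q.2.1 * Real.cos ψ + q.2.2 * Real.sin ψ
        ≤ (g ψ).2.1 * Real.cos ψ + (g ψ).2.2 * Real.sin ψ)
    (ψ ψ' : ℝ) (hsupp : ∀ i, (g ψ').1 i = 0 → (g ψ).1 i = 0) :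
    k * Real.cos (π/m)^2 ≤ |Real.cos ((ψ - ψ')/2)| := by
  have hcpos := cos_pos_m m hm
  set cm := Real.cos (π/m) with hcm
  set d := k * cm with hd
  have hd0 : 0 < d := by positivity
  set β := (g ψ).2.1 with hβ
  set γ := (g ψ).2.2 with hγ
  -- first direction bound
  obtain ⟨q1, hq1K, hq1v⟩ := hinner ψ
  have hd1 : d ≤ β * Real.cos ψ + γ * Real.sin ψ := le_trans hq1v (hgmax ψ q1 hq1K)
  -- second direction bound, via the extension argument
  obtain ⟨q2, hq2K, hq2v⟩ := hinner ψ'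
  have hd2' : d ≤ (g ψ').2.1 * Real.cos ψ' + (g ψ').2.2 * Real.sin ψ' :=
    le_trans hq2v (hgmax ψ' q2 hq2K)
  have hext : (g ψ').2.1 * Real.cos ψ' + (g ψ').2.2 * Real.sin ψ'
      ≤ β * Real.cos ψ' + γ * Real.sin ψ' :=
    ext_le m r u hr (g ψ') (g ψ) (hgK ψ') (hgK ψ) hsupp (Real.cos ψ') (Real.sin ψ') (hgmax ψ')
  have hd2 : d ≤ β * Real.cos ψ' + γ * Real.sin ψ' := le_trans hd2' hext
  -- outer bound
  have hout : β^2 + γ^2 ≤ (1/cm)^2 := outer_bd m r hm u hu (g ψ) (hgK ψ)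
  -- the half-angle identity
  set cΔ := Real.cos ((ψ - ψ')/2) with hcΔ
  have hid : 4 * cΔ^2 = (Real.cos ψ + Real.cos ψ')^2 + (Real.sin ψ + Real.sin ψ')^2 := by
    have h1 : cΔ^2 = 1/2 + Real.cos (2*((ψ - ψ')/2))/2 := Real.cos_sq _
    have h2 : 2*((ψ - ψ')/2) = ψ - ψ' := by ring
    rw [h2] at h1
    have h3 : Real.cos (ψ - ψ') = Real.cos ψ * Real.cos ψ' + Real.sin ψ * Real.sin ψ' :=
      Real.cos_sub ψ ψ'
    have h4 := Real.sin_sq_add_cos_sq ψ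
    have h5 := Real.sin_sq_add_cos_sq ψ'
    linear_combination 4*h1 + 2*h3 - h4 - h5
  -- Cauchy–Schwarz
  have hCS : ((Real.cos ψ + Real.cos ψ') * β + (Real.sin ψ + Real.sin ψ') * γ)^2
      ≤ ((Real.cos ψ + Real.cos ψ')^2 + (Real.sin ψ + Real.sin ψ')^2) * (β^2 + γ^2) := by
    nlinarith [sq_nonneg ((Real.cos ψ + Real.cos ψ') * γ - (Real.sin ψ + Real.sin ψ') * β)]
  have hA : 2*d ≤ (Real.cos ψ + Real.cos ψ') * β + (Real.sin ψ + Real.sin ψ') * γ := by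
    nlinarith [hd1, hd2]
  have hkey : d^2 * cm^2 ≤ cΔ^2 := by
    have hB2 : β^2 + γ^2 ≤ 1/cm^2 := by
      have : (1/cm)^2 = 1/cm^2 := by field_simp
      linarith [hout, this.symm.le]
    have h4d : 4*d^2 ≤ 4 * cΔ^2 * (β^2+γ^2) := by nlinarith [hCS, hA, hd0]
    have hcm2 : 0 < cm^2 := by positivity
    have hβγ : 4 * cΔ^2 * (β^2+γ^2) ≤ 4 * cΔ^2 * (1/cm^2) := by
      apply mul_le_mul_of_nonneg_left hB2 (by positivity)
    have h5 : d^2 ≤ cΔ^2 * (1/cm^2) := by linarith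
    have h6 : d^2 * cm^2 ≤ cΔ^2 * (1/cm^2) * cm^2 :=
      mul_le_mul_of_nonneg_right h5 (le_of_lt hcm2)
    have h7 : cΔ^2 * (1/cm^2) * cm^2 = cΔ^2 := by field_simp
    linarith
  have hgoal : (k * cm^2)^2 ≤ cΔ^2 := by
    have : (k*cm^2)^2 = d^2 * cm^2 := by rw [hd]; ring
    linarith [this.le, hkey]
  have hkcm : 0 ≤ k * cm^2 := by positivity
  calc k * cm^2 = Real.sqrt ((k*cm^2)^2) := by rw [Real.sqrt_sq hkcm]
    _ ≤ Real.sqrt (cΔ^2) := Real.sqrt_le_sqrt hgoal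
    _ = |cΔ| := Real.sqrt_sq_eq_abs cΔ

private lemma abs_le_inv_cm (m : ℕ) (hm : 3 ≤ m) (b c : ℝ)
    (h : b^2 + c^2 ≤ (1 / Real.cos (π/m))^2) : |b| ≤ 1 / Real.cos (π/m) := by
  have hcpos := cos_pos_m m hm
  have h1 : b^2 ≤ (1 / Real.cos (π/m))^2 := by nlinarith [sq_nonneg c]
  calc |b| = Real.sqrt (b^2) := (Real.sqrt_sq_eq_abs b).symm
    _ ≤ Real.sqrt ((1 / Real.cos (π/m))^2) := Real.sqrt_le_sqrt h1
    _ = 1 / Real.cos (π/m) := Real.sqrt_sq (by positivity)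

private lemma Kset_closed (m r : ℕ) (u : Fin r → Fin m → ℝ) : IsClosed (Kset m r u) := by
  have h1 : IsClosed {p : (Fin r → ℝ) × ℝ × ℝ | ∀ i, 0 ≤ p.1 i} := by
    rw [Set.setOf_forall]
    exact isClosed_iInter (fun i => isClosed_le continuous_const (by fun_prop))
  have h2 : IsClosed {p : (Fin r → ℝ) × ℝ × ℝ | ∀ i, (∀ x, u i x = 0) → p.1 i = 0} := by
    rw [Set.setOf_forall]
    refine isClosed_iInter (fun i => ?_)
    by_cases hdead : ∀ x, u i x = 0
    · have he : {p : (Fin r → ℝ) × ℝ × ℝ | (∀ x, u i x = 0) → p.1 i = 0}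
          = {p | p.1 i = 0} := by ext p; simp [hdead]
      rw [he]; exact isClosed_eq (by fun_prop) continuous_const
    · have he : {p : (Fin r → ℝ) × ℝ × ℝ | (∀ x, u i x = 0) → p.1 i = 0}
          = Set.univ := by ext p; simp [hdead]
      rw [he]; exact isClosed_univ
  have h3 : IsClosed {p : (Fin r → ℝ) × ℝ × ℝ | ∀ x : Fin m,
      (∑ i, u i x * p.1 i) = 1 + p.2.1 * Real.cos (2*π*(x:ℕ)/m) + p.2.2 * Real.sin (2*π*(x:ℕ)/m)} := by
    rw [Set.setOf_forall]
    exact isClosed_iInter (fun x => isClosed_eq (by fun_prop) (by fun_prop))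
  have : Kset m r u = _ ∩ (_ ∩ _) := rfl
  exact h1.inter (h2.inter h3)

private lemma Kset_compact (m r : ℕ) (hm : 3 ≤ m) (u : Fin r → Fin m → ℝ)
    (hu : ∀ i x, 0 ≤ u i x) : IsCompact (Kset m r u) := by
  have hcpos := cos_pos_m m hm
  set R : ℝ := 1 / Real.cos (π/m) with hR
  have hCz : ∀ i : Fin r, ∃ Ci : ℝ, ∀ p ∈ Kset m r u, p.1 i ≤ Ci := by
    intro i
    by_cases hdead : ∀ x, u i x = 0
    · exact ⟨0, fun p hp => le_of_eq (hp.2.1 i hdead)⟩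
    · push_neg at hdead
      obtain ⟨x₀, hx₀⟩ := hdead
      have hupos : 0 < u i x₀ := lt_of_le_of_ne (hu i x₀) (Ne.symm hx₀)
      refine ⟨(1 + 2*R) / (u i x₀), fun p hp => ?_⟩
      have hterm : u i x₀ * p.1 i ≤ ∑ j, u j x₀ * p.1 j :=
        Finset.single_le_sum (fun j _ => mul_nonneg (hu j x₀) (hp.1 j)) (Finset.mem_univ i)
      have hout := outer_bd m r hm u hu p hp
      have hb1 : |p.2.1| ≤ R := abs_le_inv_cm m hm _ _ hout
      have hb2 : |p.2.2| ≤ R := abs_le_inv_cm m hm p.2.2 p.2.1 (by linarith)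
      have hsum : ∑ j, u j x₀ * p.1 j ≤ 1 + 2*R := by
        rw [hp.2.2 x₀]
        have e1 : p.2.1 * Real.cos (2*π*(x₀:ℕ)/m) ≤ |p.2.1| := by
          calc p.2.1 * Real.cos (2*π*(x₀:ℕ)/m) ≤ |p.2.1 * Real.cos (2*π*(x₀:ℕ)/m)| := le_abs_self _
            _ = |p.2.1| * |Real.cos (2*π*(x₀:ℕ)/m)| := abs_mul _ _
            _ ≤ |p.2.1| * 1 := by
                apply mul_le_mul_of_nonneg_left (Real.abs_cos_le_one _) (abs_nonneg _)
            _ = |p.2.1| := mul_one _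
        have e2 : p.2.2 * Real.sin (2*π*(x₀:ℕ)/m) ≤ |p.2.2| := by
          calc p.2.2 * Real.sin (2*π*(x₀:ℕ)/m) ≤ |p.2.2 * Real.sin (2*π*(x₀:ℕ)/m)| := le_abs_self _
            _ = |p.2.2| * |Real.sin (2*π*(x₀:ℕ)/m)| := abs_mul _ _
            _ ≤ |p.2.2| * 1 := by
                apply mul_le_mul_of_nonneg_left (Real.abs_sin_le_one _) (abs_nonneg _)
            _ = |p.2.2| := mul_one _
        linarith
      have : u i x₀ * p.1 i ≤ 1 + 2*R := le_trans hterm hsum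
      rw [le_div_iff₀ hupos]
      linarith [this]
  choose Cz hCzs using hCz
  have hsub : Kset m r u ⊆ Set.Icc
      ((fun _ => (0:ℝ)), (-R, -R)) ((fun i => Cz i), (R, R)) := by
    intro p hp
    have hout := outer_bd m r hm u hu p hp
    have hb1 : |p.2.1| ≤ R := abs_le_inv_cm m hm _ _ hout
    have hb2 : |p.2.2| ≤ R := abs_le_inv_cm m hm p.2.2 p.2.1 (by linarith)
    rw [abs_le] at hb1 hb2
    constructor
    · exact ⟨fun i => hp.1 i, hb1.1, hb2.1⟩
    · exact ⟨fun i => hCzs i p hp, hb1.2, hb2.2⟩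
  exact (isCompact_Icc).of_isClosed_subset (Kset_closed m r u) hsub

private lemma rank_ge_two (m : ℕ) (hm : 3 ≤ m) (k : ℝ) (hk0 : 0 < k) (hk1 : k < 1)
    (r : ℕ) (u : Fin r → Fin m → ℝ) (v : Fin r → Fin m → ℝ)
    (hfac : ∀ x y, Bmat m k x y = ∑ i, u i x * v i y) : 2 ≤ r := by
  have hπ := Real.pi_pos
  have hm0 : (0:ℝ) < m := by positivity
  have hmne : (m:ℝ) ≠ 0 := ne_of_gt hm0
  have h3m : (3:ℝ) ≤ m := by exact_mod_cast hm
  set x0 : Fin m := ⟨0, by omega⟩ with hx0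
  set x1 : Fin m := ⟨1, by omega⟩ with hx1
  set ym : Fin m := ⟨m-1, by omega⟩ with hym
  have hymv : ((ym.val : ℕ) : ℝ) = (m:ℝ) - 1 := by
    rw [hym]
    push_cast [Nat.cast_sub (by omega : 1 ≤ m)]
    norm_num
  set c : ℝ := 1/(m:ℝ)^2 with hc
  have hcpos : 0 < c := by positivity
  set q := Real.cos (2*π/m) with hq
  have e00 : Bmat m k x0 x0 = c * (1 - k) := by
    simp only [Bmat, Matrix.of_apply, hx0]
    norm_num [hc]
  have e1m : Bmat m k x1 ym = c * (1 - k) := by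
    simp only [Bmat, Matrix.of_apply, hx1]
    rw [hymv]
    have harg : 2 * π * ((((1:ℕ)):ℝ) + ((m:ℝ) - 1)) / m = 2*π := by
      push_cast; field_simp; ring
    rw [harg, Real.cos_two_pi]
    simp only [hc]; ring
  have e0m : Bmat m k x0 ym = c * (1 - k * q) := by
    simp only [Bmat, Matrix.of_apply, hx0]
    rw [hymv]
    have harg : 2 * π * ((((0:ℕ)):ℝ) + ((m:ℝ) - 1)) / m = 2*π - 2*π/m := by
      push_cast; field_simp; ring
    rw [harg, Real.cos_two_pi_sub]
  have e10 : Bmat m k x1 x0 = c * (1 - k * q) := by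
    simp only [Bmat, Matrix.of_apply, hx1, hx0]
    have harg : 2 * π * ((((1:ℕ)):ℝ) + (((0:ℕ)):ℝ)) / m = 2*π/m := by
      push_cast; ring
    rw [harg]
  have hq1 : -1 ≤ q := Real.neg_one_le_cos _
  have hqlt : q < 1 := by
    have h2πm : 0 < 2*π/m := by positivity
    have h2πm' : 2*π/m < 2*π := by
      rw [div_lt_iff₀ hm0]
      nlinarith
    rcases lt_or_eq_of_le (Real.cos_le_one (2*π/m)) with h | h
    · exact h
    · exfalso
      have := (Real.cos_eq_one_iff_of_lt_of_lt (by linarith) (by linarith)).mp h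
      linarith
  by_contra hcon
  push_neg at hcon
  interval_cases r
  · have h := hfac x0 x0
    rw [e00] at h
    simp only [Finset.univ_eq_empty, Finset.sum_empty] at h
    nlinarith [mul_pos hcpos (show (0:ℝ) < 1-k by linarith)]
  · have h1 := hfac x0 x0
    have h2 := hfac x1 ym
    have h3 := hfac x0 ym
    have h4 := hfac x1 x0
    rw [Fin.sum_univ_one] at h1 h2 h3 h4
    have hminor : Bmat m k x0 x0 * Bmat m k x1 ym = Bmat m k x0 ym * Bmat m k x1 x0 := by
      rw [h1, h2, h3, h4]; ring
    rw [e00, e1m, e0m, e10] at hminor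
    have hpos1 : 0 < 1 - k := by linarith
    have hpos2 : 0 < 1 - k*q := by nlinarith
    have hsq : c^2 * ((1-k)^2 - (1-k*q)^2) = 0 := by linear_combination hminor
    have hsq2 : (1-k)^2 - (1-k*q)^2 = 0 := by
      rcases mul_eq_zero.mp hsq with h | h
      · exact absurd h (by positivity)
      · exact h
    have hfactor : ((1-k) - (1-k*q)) * ((1-k) + (1-k*q)) = 0 := by linear_combination hsq2
    rcases mul_eq_zero.mp hfactor with h | h
    · have hkq : k * q = k * 1 := by linarith
      have := mul_left_cancel₀ (ne_of_gt hk0) hkq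
      linarith
    · linarith

end AuxForStatement15

open Real MeasureTheory

set_option maxHeartbeats 1000000 in
/-- when k > cos(2π/m)/cos²(π/m), the nonnegative rank of B_m exceeds
log₂(m/2). -/
theorem Bmat_nonnegRank_gt_logb
    (m : ℕ) (hm : 3 ≤ m) (k : ℝ) (hk0 : 0 < k) (hk1 : k < 1)
    (hkl : Real.cos (2 * Real.pi / m) / (Real.cos (Real.pi / m)) ^ 2 < k) :
    Real.logb 2 ((m : ℝ) / 2) < (NonnegRank (Bmat m k) : ℝ) := by
  classical
  have hπ := Real.pi_pos
  have hm0 : (0:ℝ) < m := by positivity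
  have hmne : (m:ℝ) ≠ 0 := ne_of_gt hm0
  have hcpos := cos_pos_m m hm
  set r := NonnegRank (Bmat m k) with hrdef
  have hBnn : ∀ x y : Fin m, 0 ≤ Bmat m k x y := by
    intro x y
    simp only [Bmat, Matrix.of_apply]
    have h1 : Real.cos (2 * π * ((x.val : ℝ) + (y.val : ℝ)) / m) ≤ 1 := Real.cos_le_one _
    have h2 : k * Real.cos (2 * π * ((x.val : ℝ) + (y.val : ℝ)) / m) ≤ k := by nlinarith
    apply mul_nonneg (by positivity)
    linarith
  have hmem : ∃ (u : Fin r → Fin m → ℝ) (v : Fin r → Fin m → ℝ),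
      (∀ i x, 0 ≤ u i x) ∧ (∀ i y, 0 ≤ v i y) ∧
      ∀ x y, Bmat m k x y = ∑ i, u i x * v i y := by
    have hne : {r : ℕ | ∃ (u : Fin r → Fin m → ℝ) (v : Fin r → Fin m → ℝ),
        (∀ i x, 0 ≤ u i x) ∧ (∀ i y, 0 ≤ v i y) ∧
        ∀ x y, Bmat m k x y = ∑ i, u i x * v i y}.Nonempty := by
      refine ⟨m, fun i x => if i = x then 1 else 0, fun i y => Bmat m k i y, ?_, ?_, ?_⟩
      · intro i x; by_cases h : i = x <;> simp [h]
      · intro i y; exact hBnn i y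
      · intro x y
        have hterm : ∀ i : Fin m, (if i = x then (1:ℝ) else 0) * Bmat m k i y
            = if i = x then Bmat m k i y else 0 := by
          intro i; split <;> simp
        rw [Finset.sum_congr rfl (fun i _ => hterm i),
          Finset.sum_ite_eq' Finset.univ x (fun i => Bmat m k i y)]
        simp
    exact Nat.sInf_mem hne
  obtain ⟨u, v, hu, hv, hfac⟩ := hmem
  have hr2 : 2 ≤ r := rank_ge_two m hm k hk0 hk1 r u v hfac
  -- kill the dead rows of v
  set v' : Fin r → Fin m → ℝ := fun i y => if (∀ x, u i x = 0) then 0 else v i y with hv'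
  have hv'nn : ∀ i y, 0 ≤ v' i y := by
    intro i y
    simp only [hv']
    split
    · exact le_refl 0
    · exact hv i y
  have hfac' : ∀ x y, Bmat m k x y = ∑ i, u i x * v' i y := by
    intro x y
    rw [hfac x y]
    apply Finset.sum_congr rfl
    intro i _
    by_cases hdead : ∀ x, u i x = 0
    · rw [hdead x]; ring
    · simp only [hv', if_neg hdead]
  -- the inner points
  have hinner : ∀ ψ : ℝ, ∃ p ∈ Kset m r u,
      k * Real.cos (π/m) ≤ p.2.1 * Real.cos ψ + p.2.2 * Real.sin ψ := by
    intro ψ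
    obtain ⟨y, hy⟩ := grid_cos m hm (ψ + π)
    refine ⟨(fun i => (m:ℝ)^2 * v' i y,
      -(k * Real.cos (2*π*(y:ℕ)/m)), k * Real.sin (2*π*(y:ℕ)/m)), ⟨?_, ?_, ?_⟩, ?_⟩
    · intro i
      exact mul_nonneg (by positivity) (hv'nn i y)
    · intro i hdead
      show (m:ℝ)^2 * v' i y = 0
      simp only [hv', if_pos hdead]
      ring
    · intro x
      show ∑ i, u i x * ((m:ℝ)^2 * v' i y) = _
      have hsum : ∑ i, u i x * ((m:ℝ)^2 * v' i y) = (m:ℝ)^2 * ∑ i, u i x * v' i y := by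
        rw [Finset.mul_sum]
        apply Finset.sum_congr rfl
        intro i _
        ring
      rw [hsum, ← hfac' x y]
      simp only [Bmat, Matrix.of_apply]
      have hm2 : (m:ℝ)^2 * (1/(m:ℝ)^2 * (1 - k * Real.cos (2*π*(((x:Fin m).val:ℝ)+((y:Fin m).val:ℝ))/m)))
          = 1 - k * Real.cos (2*π*(((x:Fin m).val:ℝ)+((y:Fin m).val:ℝ))/m) := by
        field_simp
      rw [hm2]
      have hang : 2*π*(((x:Fin m).val:ℝ)+((y:Fin m).val:ℝ))/m = 2*π*((x:Fin m).val:ℝ)/m + 2*π*((y:Fin m).val:ℝ)/m := by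
        ring
      rw [hang, Real.cos_add]
      ring
    · show k * Real.cos (π/m) ≤ (-(k * Real.cos (2*π*(y:ℕ)/m))) * Real.cos ψ
        + (k * Real.sin (2*π*(y:ℕ)/m)) * Real.sin ψ
      have harg : 2*π*(y:ℕ)/m + (ψ + π) = (2*π*(y:ℕ)/m + ψ) + π := by ring
      rw [harg, Real.cos_add_pi] at hy
      have hval : (-(k * Real.cos (2*π*(y:ℕ)/m))) * Real.cos ψ
          + (k * Real.sin (2*π*(y:ℕ)/m)) * Real.sin ψ
          = k * (-Real.cos (2*π*(y:ℕ)/m + ψ)) := by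
        rw [Real.cos_add]; ring
      rw [hval]
      exact mul_le_mul_of_nonneg_left hy (le_of_lt hk0)
  have hKne : (Kset m r u).Nonempty := by
    obtain ⟨p, hp, -⟩ := hinner 0
    exact ⟨p, hp⟩
  have hKcomp := Kset_compact m r hm u hu
  have hgex : ∀ ψ : ℝ, ∃ p ∈ Kset m r u, IsMaxOn
      (fun p : (Fin r → ℝ) × ℝ × ℝ => p.2.1 * Real.cos ψ + p.2.2 * Real.sin ψ)
      (Kset m r u) p := by
    intro ψ
    exact hKcomp.exists_isMaxOn hKne (Continuous.continuousOn (by fun_prop))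
  choose g hgK hgmax using hgex
  have hgmax' : ∀ ψ : ℝ, ∀ q ∈ Kset m r u,
      q.2.1 * Real.cos ψ + q.2.2 * Real.sin ψ
        ≤ (g ψ).2.1 * Real.cos ψ + (g ψ).2.2 * Real.sin ψ := by
    intro ψ q hq
    exact hgmax ψ hq
  -- the quantity κ and the arc length δ
  set κ := k * Real.cos (π/m)^2 with hκ
  have hκpos : 0 < κ := mul_pos hk0 (pow_pos hcpos 2)
  have hκlt1 : κ < 1 := by
    have h1 : Real.cos (π/m) ≤ 1 := Real.cos_le_one _
    rw [hκ]
    nlinarith [mul_nonneg (sub_nonneg.mpr h1) (by linarith : (0:ℝ) ≤ 1 + Real.cos (π/m))]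
  have hκgt : Real.cos (2*π/m) < κ := by
    rw [hκ]
    calc Real.cos (2*π/m) = Real.cos (2*π/m) / (Real.cos (π/m))^2 * (Real.cos (π/m))^2 := by
          field_simp
      _ < k * (Real.cos (π/m))^2 := by
          apply mul_lt_mul_of_pos_right _ (pow_pos hcpos 2)
          exact hkl
  set δ := 2 * Real.arccos κ with hδ
  have hδ0 : 0 ≤ δ := by
    rw [hδ]; linarith [Real.arccos_nonneg κ]
  have harccos_lt : Real.arccos κ < 2*π/m := by
    by_contra hcon
    push_neg at hcon
    have h1 : Real.cos (Real.arccos κ) ≤ Real.cos (2*π/m) :=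
      Real.cos_le_cos_of_nonneg_of_le_pi (by positivity) (Real.arccos_le_pi κ) hcon
    rw [Real.cos_arccos (by linarith [Real.neg_one_le_cos (2*π/m)]) (le_of_lt hκlt1)] at h1
    linarith
  have hδlt : δ < 4*π/m := by
    have h4 : 4*π/m = 2*(2*π/m) := by ring
    rw [hδ, h4]
    linarith
  -- the supports, and the fibers
  set T : ℝ → Finset (Fin r) := fun ψ => Finset.univ.filter (fun i => (g ψ).1 i ≠ 0) with hT
  set Fib : Finset (Fin r) → Set ℝ := fun S => {ψ : ℝ | ψ ∈ Set.Ico (0:ℝ) (2*π) ∧ T ψ = S}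
    with hFib
  -- main estimate
  have hfinal : (m:ℝ)/2 < 2^r := by
    rcases le_or_gt 6 m with hm6 | hm5
    · -- the main case
      have hm6' : (6:ℝ) ≤ m := by exact_mod_cast hm6
      have hδ23 : δ < 2*π/3 := by
        have h1 : 4*π/m ≤ 4*π/6 := by
          apply div_le_div_of_nonneg_left (by positivity) (by norm_num) hm6'
        linarith
      have hfibm : ∀ S : Finset (Fin r), volume (Fib S) ≤ ENNReal.ofReal δ := by
        intro S
        apply fiber_measure hδ0 hδ23 (Fib S) (fun ψ hψ => hψ.1)
        intro a ha b hb
        have hsupp : ∀ i, (g b).1 i = 0 → (g a).1 i = 0 := by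
          intro i hib
          by_contra hia
          have hmem : i ∈ T a := Finset.mem_filter.mpr ⟨Finset.mem_univ i, hia⟩
          rw [ha.2, ← hb.2] at hmem
          exact (Finset.mem_filter.mp hmem).2 hib
        have hpb := pair_bound m r hm (by omega : 0 < r) k hk0 u hu hinner g hgK hgmax' a b hsupp
        have habs : |Real.cos (|a - b|/2)| = |Real.cos ((a - b)/2)| := by
          rcases abs_cases (a - b) with ⟨he, -⟩ | ⟨he, -⟩
          · rw [he]
          · rw [he]
            have : -(a-b)/2 = -((a-b)/2) := by ring
            rw [this, Real.cos_neg]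
        have hD2 : |a - b| < 2*π := by
          have h1 := ha.1
          have h2 := hb.1
          simp only [Set.mem_Ico] at h1 h2
          rw [abs_lt]
          constructor <;> linarith
        have hnear := near_lemma hκpos hκlt1 (abs_nonneg (a-b)) hD2 (by rw [habs]; exact hpb)
        rw [hδ]
        exact hnear
      have hcover : Set.Ico (0:ℝ) (2*π) ⊆ ⋃ S ∈ (Finset.univ : Finset (Finset (Fin r))), Fib S := by
        intro ψ hψ
        simp only [Set.mem_iUnion]
        exact ⟨T ψ, Finset.mem_univ _, hψ, rfl⟩
      have hvol : ENNReal.ofReal (2*π) ≤ ((2^r : ℕ) : ENNReal) * ENNReal.ofReal δ := by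
        calc ENNReal.ofReal (2*π) = volume (Set.Ico (0:ℝ) (2*π)) := by
              rw [Real.volume_Ico]; norm_num
          _ ≤ volume (⋃ S ∈ (Finset.univ : Finset (Finset (Fin r))), Fib S) :=
              measure_mono hcover
          _ ≤ ∑ S ∈ (Finset.univ : Finset (Finset (Fin r))), volume (Fib S) :=
              measure_biUnion_finset_le _ _
          _ ≤ ∑ _S ∈ (Finset.univ : Finset (Finset (Fin r))), ENNReal.ofReal δ :=
              Finset.sum_le_sum (fun S _ => hfibm S)
          _ = ((2^r : ℕ) : ENNReal) * ENNReal.ofReal δ := by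
              rw [Finset.sum_const, Finset.card_univ, Fintype.card_finset, Fintype.card_fin,
                nsmul_eq_mul]
      have hreal : 2*π ≤ (2^r : ℝ) * δ := by
        have h1 : ((2^r : ℕ) : ENNReal) * ENNReal.ofReal δ = ENNReal.ofReal ((2^r : ℝ) * δ) := by
          rw [ENNReal.ofReal_mul (by positivity : (0:ℝ) ≤ (2:ℝ)^r)]
          congr 1
          rw [show ((2:ℝ)^r) = (((2^r : ℕ) : ℝ)) by push_cast; ring]
          exact (ENNReal.ofReal_natCast _).symm
        rw [h1] at hvol
        exact (ENNReal.ofReal_le_ofReal_iff (by positivity)).mp hvol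
      have h2 : 2*π < (2^r:ℝ) * (4*π/m) :=
        lt_of_le_of_lt hreal (mul_lt_mul_of_pos_left hδlt (by positivity))
      have h3 : (2^r:ℝ)*(4*π/m) = ((2^r:ℝ) * 4 * π)/m := by ring
      rw [h3, lt_div_iff₀ hm0] at h2
      rw [div_lt_iff₀ (by norm_num : (0:ℝ) < 2)]
      nlinarith
    · -- small m
      have hm5' : (m:ℝ) ≤ 5 := by exact_mod_cast (by omega : m ≤ 5)
      have h4r : (4:ℝ) ≤ 2^r := by
        calc (4:ℝ) = 2^(2:ℕ) := by norm_num
          _ ≤ 2^r := by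
              apply pow_le_pow_right₀ (by norm_num) hr2
      linarith
  calc Real.logb 2 ((m:ℝ)/2) < Real.logb 2 ((2:ℝ)^r) :=
        Real.logb_lt_logb (by norm_num) (by positivity) hfinal
    _ = r := by rw [← Real.rpow_natCast 2 r, Real.logb_rpow (by norm_num) (by norm_num)]

end
end

section
/- Let m ≥ 2 be an integer and k ∈ (0,1). Then the PSD-rank of the m×m correlation B_m equals 2: the explicit 2×2 positive semidefinite matrices C_x = (1/(√2·m))·[[1, √k·e^{2πi(x−1)/m}], [√k·e^{−2πi(x−1)/m}, 1]] and D_y = (1/(√2·m))·[[1, −√k·e^{−2πi(y−1)/m}], [−√k·e^{2πi(y−1)/m}, 1]] satisfy tr(C_x D_y) = B_m(x,y) for all x,y, so rank_psd(B_m) ≤ 2, and since B_m has matrix rank at least 2, rank_psd(B_m) = 2. -/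
open Matrix BigOperators Finset
open scoped Kronecker ComplexOrder

noncomputable section

/-- The 2×2 matrix C_x of the PSD factorization of B_m (0-indexed). -/
def Cmat (m : ℕ) (k : ℝ) (x : Fin m) : Matrix (Fin 2) (Fin 2) ℂ :=
  (((Real.sqrt 2 * m)⁻¹ : ℝ) : ℂ) •
    !![1, (Real.sqrt k : ℂ) * Complex.exp (2 * Real.pi * Complex.I * (x.val : ℂ) / m);
       (Real.sqrt k : ℂ) * Complex.exp (-(2 * Real.pi * Complex.I * (x.val : ℂ) / m)), 1]

/-- The 2×2 matrix D_y of the PSD factorization of B_m. -/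
def Dmat (m : ℕ) (k : ℝ) (y : Fin m) : Matrix (Fin 2) (Fin 2) ℂ :=
  (((Real.sqrt 2 * m)⁻¹ : ℝ) : ℂ) •
    !![1, -((Real.sqrt k : ℂ) * Complex.exp (-(2 * Real.pi * Complex.I * (y.val : ℂ) / m)));
       -((Real.sqrt k : ℂ) * Complex.exp (2 * Real.pi * Complex.I * (y.val : ℂ) / m)), 1]

/-! ### Auxiliary lemmas for `Bmat_psdRank_eq_two` -/

lemma smul_psd_aux {n : ℕ} {M : Matrix (Fin n) (Fin n) ℂ} (hM : M.PosSemidef) {c : ℝ}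
    (hc : 0 ≤ c) : ((c : ℂ) • M).PosSemidef := by
  constructor
  · unfold Matrix.IsHermitian
    rw [Matrix.conjTranspose_smul, hM.1]
    congr 1
    simp [Complex.conj_ofReal]
  · intro x
    exact (hM.smul (Complex.zero_le_real.mpr hc)).2 x

lemma conj_exp_arg (m : ℕ) (v : ℕ) :
    (starRingEnd ℂ) (Complex.exp (2 * Real.pi * Complex.I * (v : ℂ) / m))
      = Complex.exp (-(2 * Real.pi * Complex.I * (v : ℂ) / m)) := by
  rw [← Complex.exp_conj]
  congr 1
  simp [map_div₀, Complex.conj_I, Complex.conj_ofReal, map_ofNat]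
  ring

lemma conj_exp_arg' (m : ℕ) (v : ℕ) :
    (starRingEnd ℂ) (Complex.exp (-(2 * Real.pi * Complex.I * (v : ℂ) / m)))
      = Complex.exp (2 * Real.pi * Complex.I * (v : ℂ) / m) := by
  rw [← conj_exp_arg, Complex.conj_conj]

lemma Cmat_posSemidef (m : ℕ) (k : ℝ) (hk0 : 0 ≤ k) (hk1 : k ≤ 1) (x : Fin m) :
    (Cmat m k x).PosSemidef := by
  have hs : (0:ℝ) ≤ (Real.sqrt 2 * m)⁻¹ := by positivity
  unfold Cmat
  refine smul_psd_aux ?_ hs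
  set a : ℂ := (Real.sqrt k : ℂ) * Complex.exp (2 * Real.pi * Complex.I * (x.val : ℂ) / m) with ha
  set N : Matrix (Fin 2) (Fin 2) ℂ := !![1, a; 0, (Real.sqrt (1-k) : ℂ)] with hN
  have hconj : (starRingEnd ℂ) a
      = (Real.sqrt k : ℂ) * Complex.exp (-(2 * Real.pi * Complex.I * (x.val : ℂ) / m)) := by
    rw [ha, _root_.map_mul, Complex.conj_ofReal, conj_exp_arg]
  have haa : (Real.sqrt k : ℂ) * Complex.exp (-(2 * Real.pi * Complex.I * (x.val : ℂ) / m)) * a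
      = (k : ℂ) := by
    rw [ha]
    rw [show (Real.sqrt k : ℂ) * Complex.exp (-(2 * Real.pi * Complex.I * (x.val : ℂ) / m)) *
        ((Real.sqrt k : ℂ) * Complex.exp (2 * Real.pi * Complex.I * (x.val : ℂ) / m))
        = ((Real.sqrt k : ℂ) * (Real.sqrt k : ℂ)) *
          (Complex.exp (-(2 * Real.pi * Complex.I * (x.val : ℂ) / m)) *
           Complex.exp (2 * Real.pi * Complex.I * (x.val : ℂ) / m)) from by ring]
    rw [← Complex.exp_add, neg_add_cancel, Complex.exp_zero, mul_one,
      ← Complex.ofReal_mul, Real.mul_self_sqrt hk0]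
  have key : (!![1, a;
      (Real.sqrt k : ℂ) * Complex.exp (-(2 * Real.pi * Complex.I * (x.val : ℂ) / m)), 1]
        : Matrix (Fin 2) (Fin 2) ℂ) = Nᴴ * N := by
    ext i j
    fin_cases i <;> fin_cases j <;>
      simp [hN, Matrix.mul_apply, Fin.sum_univ_two, Matrix.conjTranspose_apply,
        hconj, Complex.conj_ofReal]
    rw [haa, show ((Real.sqrt (1-k) :ℝ):ℂ) * (Real.sqrt (1-k) : ℂ)
        = ((Real.sqrt (1-k) * Real.sqrt (1-k) : ℝ) : ℂ) from by push_cast; ring,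
      Real.mul_self_sqrt (by linarith)]
    push_cast
    ring
  rw [key]
  exact Matrix.posSemidef_conjTranspose_mul_self N

lemma Dmat_posSemidef (m : ℕ) (k : ℝ) (hk0 : 0 ≤ k) (hk1 : k ≤ 1) (y : Fin m) :
    (Dmat m k y).PosSemidef := by
  have hs : (0:ℝ) ≤ (Real.sqrt 2 * m)⁻¹ := by positivity
  unfold Dmat
  refine smul_psd_aux ?_ hs
  set a : ℂ := -((Real.sqrt k : ℂ) *
    Complex.exp (-(2 * Real.pi * Complex.I * (y.val : ℂ) / m))) with ha
  set N : Matrix (Fin 2) (Fin 2) ℂ := !![1, a; 0, (Real.sqrt (1-k) : ℂ)] with hN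
  have hconj : (starRingEnd ℂ) a
      = -((Real.sqrt k : ℂ) * Complex.exp (2 * Real.pi * Complex.I * (y.val : ℂ) / m)) := by
    rw [ha, map_neg, _root_.map_mul, Complex.conj_ofReal, conj_exp_arg']
  have haa : -((Real.sqrt k : ℂ) * Complex.exp (2 * Real.pi * Complex.I * (y.val : ℂ) / m)) * a
      = (k : ℂ) := by
    rw [ha]
    rw [show -((Real.sqrt k : ℂ) * Complex.exp (2 * Real.pi * Complex.I * (y.val : ℂ) / m)) *
        -((Real.sqrt k : ℂ) * Complex.exp (-(2 * Real.pi * Complex.I * (y.val : ℂ) / m)))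
        = ((Real.sqrt k : ℂ) * (Real.sqrt k : ℂ)) *
          (Complex.exp (-(2 * Real.pi * Complex.I * (y.val : ℂ) / m)) *
           Complex.exp (2 * Real.pi * Complex.I * (y.val : ℂ) / m)) from by ring]
    rw [← Complex.exp_add, neg_add_cancel, Complex.exp_zero, mul_one,
      ← Complex.ofReal_mul, Real.mul_self_sqrt hk0]
  have key : (!![1, a;
      -((Real.sqrt k : ℂ) * Complex.exp (2 * Real.pi * Complex.I * (y.val : ℂ) / m)), 1]
        : Matrix (Fin 2) (Fin 2) ℂ) = Nᴴ * N := by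
    ext i j
    fin_cases i <;> fin_cases j <;>
      simp [hN, Matrix.mul_apply, Fin.sum_univ_two, Matrix.conjTranspose_apply,
        hconj, Complex.conj_ofReal]
    have h1k : ((Real.sqrt (1-k) :ℝ):ℂ) * ((Real.sqrt (1-k) :ℝ): ℂ) = 1 - (k:ℂ) := by
      rw [show ((Real.sqrt (1-k) :ℝ):ℂ) * ((Real.sqrt (1-k):ℝ) : ℂ)
        = ((Real.sqrt (1-k) * Real.sqrt (1-k) : ℝ) : ℂ) from by push_cast; ring,
        Real.mul_self_sqrt (by linarith)]
      push_cast
      ring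
    linear_combination -haa - h1k
  rw [key]
  exact Matrix.posSemidef_conjTranspose_mul_self N

lemma two_cos_complex (z : ℂ) :
    Complex.exp (z * Complex.I) + Complex.exp (-z * Complex.I) = 2 * Complex.cos z := by
  rw [Complex.cos]; ring

lemma trace_CD (m : ℕ) (hm : 2 ≤ m) (k : ℝ) (hk0 : 0 ≤ k) (x y : Fin m) :
    ((Bmat m k x y : ℝ) : ℂ) = (Cmat m k x * Dmat m k y).trace := by
  have hm0 : (m : ℝ) ≠ 0 := by positivity
  have hm0' : (m : ℂ) ≠ 0 := by exact_mod_cast Complex.ofReal_ne_zero.mpr hm0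
  have h2 : ((Real.sqrt 2 : ℝ) : ℂ) * ((Real.sqrt 2 : ℝ) : ℂ) = 2 := by
    rw [← Complex.ofReal_mul, Real.mul_self_sqrt (by norm_num)]; norm_num
  have hs2 : ((Real.sqrt 2 : ℝ) : ℂ) ≠ 0 := by
    simp [Real.sqrt_ne_zero']
  have hkk : ((Real.sqrt k : ℝ) : ℂ) * ((Real.sqrt k : ℝ) : ℂ) = (k : ℂ) := by
    rw [← Complex.ofReal_mul, Real.mul_self_sqrt hk0]
  set φ : ℂ := 2 * (Real.pi : ℂ) * (((x.val : ℕ) : ℂ) + ((y.val : ℕ) : ℂ)) / (m : ℂ) with hφ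
  have hA : Complex.exp (2 * (Real.pi:ℂ) * (x.val : ℂ) * Complex.I / m) *
      Complex.exp (2 * (Real.pi:ℂ) * (y.val : ℂ) * Complex.I / m)
      = Complex.exp (φ * Complex.I) := by
    rw [← Complex.exp_add]; congr 1; rw [hφ]; ring
  have hB : Complex.exp (-(2 * (Real.pi:ℂ) * (x.val : ℂ) * Complex.I / m)) *
      Complex.exp (-(2 * (Real.pi:ℂ) * (y.val : ℂ) * Complex.I / m))
      = Complex.exp (-φ * Complex.I) := by
    rw [← Complex.exp_add]; congr 1; rw [hφ]; ring
  have hC := two_cos_complex φ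
  simp only [Bmat, Cmat, Dmat, Matrix.of_apply, Matrix.trace, Matrix.diag,
    Matrix.mul_apply, Matrix.smul_apply, Fin.sum_univ_two, Matrix.cons_val', Matrix.cons_val_zero,
    Matrix.cons_val_one, Matrix.head_cons, Matrix.head_fin_const, Matrix.empty_val',
    Matrix.cons_val_fin_one, smul_eq_mul]
  push_cast
  field_simp
  linear_combination ((Real.sqrt k:ℂ)^2) * hA
    + ((Real.sqrt k:ℂ)^2) * hB
    + ((Complex.exp (φ * Complex.I) + Complex.exp (-φ * Complex.I))) * hkk
    + (k:ℂ) * hC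
    + (1 - (k:ℂ) * Complex.cos φ) * h2

lemma cos_two_pi_div_lt_one (m : ℕ) (hm : 2 ≤ m) : Real.cos (2 * Real.pi / m) < 1 := by
  have hπ := Real.pi_pos
  have hm0 : (0:ℝ) < m := by positivity
  have hpos : 0 < 2 * Real.pi / m := by positivity
  have hlt : 2 * Real.pi / m < 2 * Real.pi := by
    rw [div_lt_iff₀ hm0]
    have hm2 : (2:ℝ) ≤ m := by exact_mod_cast hm
    nlinarith [mul_pos hπ (show (0:ℝ) < (m:ℝ) - 1 by linarith)]
  refine lt_of_le_of_ne (Real.cos_le_one _) fun h => ?_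
  have := (Real.cos_eq_one_iff_of_lt_of_lt (by linarith) hlt).mp h
  linarith

lemma psdRank_ge_two (m : ℕ) (hm : 2 ≤ m) (k : ℝ) (hk0 : 0 < k) (hk1 : k < 1)
    (r : ℕ) (C D : Fin m → Matrix (Fin r) (Fin r) ℂ)
    (h : ∀ x y, ((Bmat m k x y : ℝ) : ℂ) = (C x * D y).trace) : 2 ≤ r := by
  have hm0 : (0:ℝ) < m := by exact_mod_cast (by omega : 0 < m)
  set x0 : Fin m := ⟨0, by omega⟩
  set x1 : Fin m := ⟨1, by omega⟩
  set ym : Fin m := ⟨m - 1, by omega⟩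
  have hm1 : ((m - 1 : ℕ) : ℝ) = (m:ℝ) - 1 := by
    push_cast [Nat.cast_sub (by omega : 1 ≤ m)]; ring
  have e1 : Bmat m k x0 x0 = 1 / (m:ℝ)^2 * (1 - k) := by
    simp [Bmat, x0]
  have e2 : Bmat m k x1 ym = 1 / (m:ℝ)^2 * (1 - k) := by
    have harg : 2 * Real.pi * (((x1.val : ℕ):ℝ) + ((ym.val : ℕ):ℝ)) / m = 2 * Real.pi := by
      simp only [x1, ym]
      rw [hm1]
      push_cast
      field_simp
      ring
    simp only [Bmat, Matrix.of_apply, harg, Real.cos_two_pi]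
    ring
  have e3 : Bmat m k x0 ym = 1 / (m:ℝ)^2 * (1 - k * Real.cos (2 * Real.pi / m)) := by
    have harg : 2 * Real.pi * (((x0.val : ℕ):ℝ) + ((ym.val : ℕ):ℝ)) / m
        = 2 * Real.pi - 2 * Real.pi / m := by
      simp only [x0, ym]
      rw [hm1]
      push_cast
      field_simp
      ring
    simp only [Bmat, Matrix.of_apply, harg, Real.cos_two_pi_sub]
  have e4 : Bmat m k x1 x0 = 1 / (m:ℝ)^2 * (1 - k * Real.cos (2 * Real.pi / m)) := by
    simp only [Bmat, Matrix.of_apply, x1, x0]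
    norm_num
  by_contra hr
  interval_cases r
  · have h0 := h x0 x0
    have : (C x0 * D x0).trace = 0 := by
      simp [Matrix.trace]
    rw [this, Complex.ofReal_eq_zero, e1] at h0
    have hk1' : (0:ℝ) < 1 - k := by linarith
    have : 0 < 1 / (m:ℝ)^2 * (1 - k) := by positivity
    linarith [this, h0.le, h0.ge]
  · have hxy : ∀ x y, ((Bmat m k x y : ℝ) : ℂ) = C x 0 0 * D y 0 0 := by
      intro x y
      rw [h x y]
      simp [Matrix.trace, Matrix.mul_apply]
    have key : ((Bmat m k x0 ym : ℝ) : ℂ) * ((Bmat m k x1 x0 : ℝ) : ℂ)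
        = ((Bmat m k x0 x0 : ℝ) : ℂ) * ((Bmat m k x1 ym : ℝ) : ℂ) := by
      rw [hxy x0 ym, hxy x1 x0, hxy x0 x0, hxy x1 ym]; ring
    have keyR : Bmat m k x0 ym * Bmat m k x1 x0 = Bmat m k x0 x0 * Bmat m k x1 ym := by
      exact_mod_cast key
    rw [e1, e2, e3, e4] at keyR
    have hc := cos_two_pi_div_lt_one m hm
    have hm2 : (0:ℝ) < 1 / (m:ℝ)^2 := by positivity
    have h5 : (1 - k) * (1 - k) < (1 - k * Real.cos (2 * Real.pi / m)) *
        (1 - k * Real.cos (2 * Real.pi / m)) := by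
      nlinarith [mul_pos hk0 (sub_pos.mpr hc)]
    nlinarith [mul_lt_mul_of_pos_left h5 (mul_pos hm2 hm2)]

/-- the PSD-rank of B_m equals 2, witnessed by the explicit PSD matrices
C_x, D_y with tr(C_x D_y) = B_m(x,y). -/
theorem Bmat_psdRank_eq_two
    (m : ℕ) (hm : 2 ≤ m) (k : ℝ) (hk0 : 0 < k) (hk1 : k < 1) :
    (∀ x, (Cmat m k x).PosSemidef) ∧ (∀ y, (Dmat m k y).PosSemidef) ∧
    (∀ x y, ((Bmat m k x y : ℝ) : ℂ) = (Cmat m k x * Dmat m k y).trace) ∧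
    PsdRank (Bmat m k) = 2 := by
  have hCp : ∀ x, (Cmat m k x).PosSemidef := fun x => Cmat_posSemidef m k hk0.le hk1.le x
  have hDp : ∀ y, (Dmat m k y).PosSemidef := fun y => Dmat_posSemidef m k hk0.le hk1.le y
  have htr : ∀ x y, ((Bmat m k x y : ℝ) : ℂ) = (Cmat m k x * Dmat m k y).trace :=
    fun x y => trace_CD m hm k hk0.le x y
  refine ⟨hCp, hDp, htr, ?_⟩
  unfold PsdRank
  apply le_antisymm
  · exact Nat.sInf_le ⟨Cmat m k, Dmat m k, hCp, hDp, htr⟩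
  · refine le_csInf ⟨2, Cmat m k, Dmat m k, hCp, hDp, htr⟩ ?_
    rintro b ⟨C, D, -, -, hb⟩
    exact psdRank_ge_two m hm k hk0 hk1 b C D hb

end
end
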